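/- No block move decreases the number of bad pairs of a permutation by more than four. -/
import Mathlib


/-- Number of descents of a list (one-line notation). -/
def desNum (p : List ℕ) : ℕ :=
  ((Finset.range (p.length - 1)).filter (fun i => p.getD (i+1) 0 < p.getD i 0)).card

/-- The extension of `p` by a leading `0` and trailing `n+1`. -/
def extList (p : List ℕ) : List ℕ := 0 :: (p ++ [p.length + 1])

/-- Number of bad pairs of `p`. -/
def badNum (p : List ℕ) : ℕ :=
  ((Finset.range (p.length + 1)).filter
    (fun i => (extList p).getD i 0 + 1 ≠ (extList p).getD (i+1) 0)).card

/-- `q` is obtained from `p` by one block move: interchanging two disjoint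
nonempty blocks of consecutive entries. -/
def IsBlockMove (p q : List ℕ) : Prop :=
  ∃ A X B Y C : List ℕ, X ≠ [] ∧ Y ≠ [] ∧
    p = A ++ X ++ B ++ Y ++ C ∧ q = A ++ Y ++ B ++ X ++ C

/-- `p` is a permutation of `{1,…,n}` in one-line notation. -/
def IsPermList (p : List ℕ) : Prop := p.Perm (List.range' 1 p.length)

/-- `p` can be sorted to the identity `1 2 … n` using at most `k` block moves. -/
def SortableIn (p : List ℕ) (k : ℕ) : Prop :=
  ∃ m ≤ k, ∃ f : ℕ → List ℕ, f 0 = p ∧ f m = List.range' 1 p.length ∧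
    ∀ i < m, IsBlockMove (f i) (f (i+1))

/-- Recursive count of bad adjacent pairs of a list. -/
def badCount : List ℕ → ℕ
  | x :: y :: t => (if x + 1 = y then 0 else 1) + badCount (y :: t)
  | _ => 0

lemma badCount_append_le (a b : List ℕ) :
    badCount (a ++ b) ≤ badCount a + badCount b + 1 := by
  induction a with
  | nil => simp [badCount]
  | cons x t ih =>
    cases t with
    | nil =>
      cases b with
      | nil => simp [badCount]
      | cons y s =>
        show badCount (x :: y :: s) ≤ badCount [x] + badCount (y :: s) + 1
        rw [show badCount (x :: y :: s) =
              (if x + 1 = y then 0 else 1) + badCount (y :: s) from rfl,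
            show badCount [x] = 0 from rfl]
        split <;> omega
    | cons y s =>
      have e1 : badCount (x :: (y :: s ++ b)) =
          (if x + 1 = y then 0 else 1) + badCount ((y :: s) ++ b) := rfl
      have e2 : badCount (x :: y :: s) =
          (if x + 1 = y then 0 else 1) + badCount (y :: s) := rfl
      rw [List.cons_append, e1, e2]
      have := ih
      split <;> omega

lemma badCount_append_ge (a b : List ℕ) :
    badCount a + badCount b ≤ badCount (a ++ b) := by
  induction a with
  | nil => simp [badCount]
  | cons x t ih =>
    cases t with
    | nil =>
      cases b with
      | nil => simp [badCount]
      | cons y s =>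
        show badCount [x] + badCount (y :: s) ≤ badCount (x :: y :: s)
        rw [show badCount (x :: y :: s) =
              (if x + 1 = y then 0 else 1) + badCount (y :: s) from rfl,
            show badCount [x] = 0 from rfl]
        split <;> omega
    | cons y s =>
      have e1 : badCount (x :: (y :: s ++ b)) =
          (if x + 1 = y then 0 else 1) + badCount ((y :: s) ++ b) := rfl
      have e2 : badCount (x :: y :: s) =
          (if x + 1 = y then 0 else 1) + badCount (y :: s) := rfl
      rw [List.cons_append, e1, e2]
      have := ih
      split <;> omega

lemma filter_range_succ_card (n : ℕ) (P : ℕ → Prop) [DecidablePred P] :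
    ((Finset.range (n+1)).filter P).card
      = ((Finset.range n).filter (fun i => P (i+1))).card + (if P 0 then 1 else 0) := by
  simp only [Finset.card_filter]
  exact Finset.sum_range_succ' _ n

lemma card_filter_eq_badCount (L : List ℕ) :
    ((Finset.range (L.length - 1)).filter
      (fun i => L.getD i 0 + 1 ≠ L.getD (i+1) 0)).card = badCount L := by
  induction L with
  | nil => simp [badCount]
  | cons x t ih =>
    cases t with
    | nil => simp [badCount]
    | cons y s =>
      have hlen : (x :: y :: s).length - 1 = s.length + 1 := by simp
      rw [hlen, filter_range_succ_card]
      have heq : ((Finset.range s.length).filter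
          (fun i => (x :: y :: s).getD (i+1) 0 + 1 ≠ (x :: y :: s).getD (i+1+1) 0)).card
          = ((Finset.range ((y :: s).length - 1)).filter
          (fun i => (y :: s).getD i 0 + 1 ≠ (y :: s).getD (i+1) 0)).card := by
        simp [List.getD_cons_succ]
      rw [heq, ih]
      have h2 : badCount (x :: y :: s) =
          (if x + 1 = y then 0 else 1) + badCount (y :: s) := rfl
      rw [h2]
      simp only [List.getD_cons_succ, List.getD_cons_zero]
      by_cases hxy : x + 1 = y <;> simp [hxy]
      omega

lemma badNum_eq (p : List ℕ) : badNum p = badCount (extList p) := by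
  have hlen : (extList p).length - 1 = p.length + 1 := by simp [extList]
  rw [badNum, ← hlen, card_filter_eq_badCount]

/-- No block move decreases the number of bad pairs by more than four. -/
theorem blockMove_badNum (p q : List ℕ) (hp : IsPermList p)
    (h : IsBlockMove p q) : badNum p ≤ badNum q + 4 := by
  obtain ⟨A, X, B, Y, C, hX, hY, hpE, hqE⟩ := h
  have hlen : q.length = p.length := by
    subst hpE hqE; simp [List.length_append]; omega
  set W1 : List ℕ := 0 :: A with hW1
  set W3 : List ℕ := C ++ [p.length + 1] with hW3
  have hep : extList p = W1 ++ (X ++ (B ++ (Y ++ W3))) := by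
    simp [extList, hpE, hW1, hW3]
  have hplen : p.length = A.length + X.length + B.length + Y.length + C.length := by
    subst hpE; simp [List.length_append]; omega
  have heq : extList q = W1 ++ (Y ++ (B ++ (X ++ W3))) := by
    simp [extList, hqE, hlen, hW1, hW3]
    omega
  rw [badNum_eq, badNum_eq, hep, heq]
  -- upper bound on p side
  have u1 := badCount_append_le W1 (X ++ (B ++ (Y ++ W3)))
  have u2 := badCount_append_le X (B ++ (Y ++ W3))
  have u3 := badCount_append_le B (Y ++ W3)
  have u4 := badCount_append_le Y W3
  -- lower bound on q side
  have l1 := badCount_append_ge W1 (Y ++ (B ++ (X ++ W3)))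
  have l2 := badCount_append_ge Y (B ++ (X ++ W3))
  have l3 := badCount_append_ge B (X ++ W3)
  have l4 := badCount_append_ge X W3
  omega
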